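/- Under the assumptions of the previous theorem, if additionally rank(Df(x)) = k - 1 for all x in P_int, then the edge P_E is contained in P_0, the set of Pareto critical points all of whose KKT multipliers have at least one zero component. -/

import Mathlib

noncomputable def grad (n : ℕ) (g : (Fin n → ℝ) → ℝ) (x : Fin n → ℝ) : Fin n → ℝ :=
  fun j => fderiv ℝ g x (Pi.single j 1)

noncomputable def Ftilde (n K : ℕ) (f : Fin (K + 1) → (Fin n → ℝ) → ℝ)
    (p : (Fin n → ℝ) × (Fin K → ℝ)) : Fin n → ℝ :=
  (∑ i : Fin K, p.2 i •
      (grad n (f i.castSucc) p.1 - grad n (f (Fin.last K)) p.1))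
    + grad n (f (Fin.last K)) p.1

def openSimplex (K : ℕ) : Set (Fin K → ℝ) := {α | (∀ i, 0 < α i) ∧ ∑ i, α i < 1}

def closedSimplex (K : ℕ) : Set (Fin K → ℝ) := {α | (∀ i, 0 ≤ α i) ∧ ∑ i, α i ≤ 1}

noncomputable def DxFtilde (n K : ℕ) (f : Fin (K + 1) → (Fin n → ℝ) → ℝ)
    (p : (Fin n → ℝ) × (Fin K → ℝ)) : (Fin n → ℝ) →L[ℝ] (Fin n → ℝ) :=
  fderiv ℝ (fun x => Ftilde n K f (x, p.2)) p.1

def ParetoCritical (n K : ℕ) (f : Fin (K + 1) → (Fin n → ℝ) → ℝ) : Set (Fin n → ℝ) :=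
  {x | ∃ α ∈ closedSimplex K, Ftilde n K f (x, α) = 0}

def ParetoCriticalInt (n K : ℕ) (f : Fin (K + 1) → (Fin n → ℝ) → ℝ) : Set (Fin n → ℝ) :=
  {x | ∃ α ∈ openSimplex K, Ftilde n K f (x, α) = 0}

noncomputable def Jac (n k : ℕ) (f : Fin k → (Fin n → ℝ) → ℝ) (x : Fin n → ℝ) :
    Matrix (Fin k) (Fin n) ℝ :=
  Matrix.of fun i j => fderiv ℝ (f i) x (Pi.single j 1)

def Tan {E : Type*} [NormedAddCommGroup E] [NormedSpace ℝ E] (Y : Set E) (x : E) :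
    Set E :=
  {v | v = 0 ∨ ∃ u : ℕ → E, (∀ i, u i ≠ 0) ∧
    Filter.Tendsto u Filter.atTop (nhds 0) ∧ (∀ i, x + u i ∈ Y) ∧
    Filter.Tendsto (fun i => ‖u i‖⁻¹ • u i) Filter.atTop (nhds (‖v‖⁻¹ • v))}

def ParetoEdge (n K : ℕ) (f : Fin (K + 1) → (Fin n → ℝ) → ℝ) : Set (Fin n → ℝ) :=
  {x ∈ ParetoCritical n K f |
    Tan (ParetoCriticalInt n K f) x ≠ Neg.neg '' Tan (ParetoCriticalInt n K f) x}

/- ### Auxiliary lemmas -/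

open Filter Topology ContinuousLinearMap

section Aux

variable {A E : Type*} [NormedAddCommGroup A] [NormedSpace ℝ A]
  [NormedAddCommGroup E] [NormedSpace ℝ E]

/-- If `u m = t m • s m` with `t m > 0` and `s m → z ≠ 0`, then the normalized directions of
`u` converge to the direction of `z`, and `u m` is eventually nonzero. -/
lemma tendsto_norm_inv_smul_of_pos_smul {u : ℕ → E} {t : ℕ → ℝ} (ht : ∀ m, 0 < t m) {z : E}
    (hz : z ≠ 0) (h : Filter.Tendsto (fun m => (t m)⁻¹ • u m) atTop (𝓝 z)) :
    Filter.Tendsto (fun m => ‖u m‖⁻¹ • u m) atTop (𝓝 (‖z‖⁻¹ • z)) ∧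
      ∀ᶠ m in atTop, u m ≠ 0 := by
  set s : ℕ → E := fun m => (t m)⁻¹ • u m with hs
  have hu : ∀ m, u m = t m • s m := by
    intro m; rw [hs]; simp [smul_smul, mul_inv_cancel₀ (ht m).ne']
  have key : ∀ m, ‖u m‖⁻¹ • u m = ‖s m‖⁻¹ • s m := by
    intro m
    rw [hu m, norm_smul, Real.norm_eq_abs, abs_of_pos (ht m), smul_smul, mul_inv,
      mul_comm ((t m)⁻¹) _, mul_assoc, inv_mul_cancel₀ (ht m).ne', mul_one]
  constructor
  · have h1 : Filter.Tendsto (fun m => ‖s m‖⁻¹) atTop (𝓝 ‖z‖⁻¹) :=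
      (h.norm).inv₀ (norm_ne_zero_iff.mpr hz)
    simpa only [key] using h1.smul h
  · filter_upwards [h.eventually_ne hz] with m hm
    intro h0
    apply hm
    rw [hs]; simp [h0]

/-- Directional limits along a differentiable map. -/
lemma dir_limit {g : A → E} {Dg : A →L[ℝ] E} {α₀ : A} (hg : HasFDerivAt g Dg α₀)
    {β : ℕ → A} (hβ0 : Filter.Tendsto β atTop (𝓝 0)) {d : A}
    (hd : Filter.Tendsto (fun m => ‖β m‖⁻¹ • β m) atTop (𝓝 d)) :
    Filter.Tendsto (fun m => ‖β m‖⁻¹ • (g (α₀ + β m) - g α₀)) atTop (𝓝 (Dg d)) := by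
  have ho := hasFDerivAt_iff_isLittleO_nhds_zero.mp hg
  have ho2 := ho.comp_tendsto hβ0
  have h1 : Filter.Tendsto (fun m => ‖β m‖⁻¹ • (g (α₀ + β m) - g α₀ - Dg (β m))) atTop (𝓝 0) := by
    rw [tendsto_zero_iff_norm_tendsto_zero]
    have h2 := ho2.norm_norm.tendsto_div_nhds_zero
    refine h2.congr fun m => ?_
    simp only [Function.comp_apply]
    rw [norm_smul, norm_inv, norm_norm, div_eq_inv_mul]
  have h2 : Filter.Tendsto (fun m => Dg (‖β m‖⁻¹ • β m)) atTop (𝓝 (Dg d)) :=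
    (Dg.continuous.tendsto d).comp hd
  have h3 := h1.add h2
  rw [zero_add] at h3
  refine h3.congr fun m => ?_
  rw [map_smul, ← smul_add, sub_add_cancel]

lemma mem_tan_of_eventually {Y : Set E} {x : E} {w : ℕ → E} {v : E}
    (hw0 : Filter.Tendsto w atTop (𝓝 0))
    (h : ∀ᶠ m in atTop, w m ≠ 0 ∧ x + w m ∈ Y)
    (hdir : Filter.Tendsto (fun m => ‖w m‖⁻¹ • w m) atTop (𝓝 (‖v‖⁻¹ • v))) :
    v ∈ Tan Y x := by
  obtain ⟨N, hN⟩ := eventually_atTop.mp h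
  have hshift : Filter.Tendsto (fun m : ℕ => m + N) atTop atTop := tendsto_add_atTop_nat N
  exact Or.inr ⟨fun m => w (m + N), fun m => (hN _ (Nat.le_add_left N m)).1,
    hw0.comp hshift, fun m => (hN _ (Nat.le_add_left N m)).2, hdir.comp hshift⟩

end Aux

lemma isOpen_openSimplex (K : ℕ) : IsOpen (openSimplex K) := by
  have h1 : IsOpen {α : Fin K → ℝ | ∀ i, 0 < α i} := by
    rw [Set.setOf_forall]
    exact isOpen_iInter_of_finite fun i => isOpen_lt continuous_const (continuous_apply i)
  have h2 : IsOpen {α : Fin K → ℝ | ∑ i, α i < 1} :=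
    isOpen_lt (continuous_finset_sum _ fun i _ => continuous_apply i) continuous_const
  exact h1.inter h2

lemma openSimplex_subset (K : ℕ) : openSimplex K ⊆ closedSimplex K :=
  fun α ⟨h1, h2⟩ => ⟨fun i => (h1 i).le, h2.le⟩

lemma isCompact_closedSimplex (K : ℕ) : IsCompact (closedSimplex K) := by
  have hsub : closedSimplex K ⊆ Set.Icc 0 1 := by
    rintro α ⟨h0, h1⟩
    refine Set.mem_Icc.mpr ⟨fun i => h0 i, fun i => ?_⟩
    calc α i ≤ ∑ j, α j := Finset.single_le_sum (fun j _ => h0 j) (Finset.mem_univ i)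
    _ ≤ 1 := h1
  have hcl : IsClosed (closedSimplex K) := by
    have h1 : IsClosed {α : Fin K → ℝ | ∀ i, 0 ≤ α i} := by
      rw [Set.setOf_forall]
      exact isClosed_iInter fun i => isClosed_le continuous_const (continuous_apply i)
    have h2 : IsClosed {α : Fin K → ℝ | ∑ i, α i ≤ 1} :=
      isClosed_le (continuous_finset_sum _ fun i _ => continuous_apply i) continuous_const
    exact h1.inter h2
  exact isCompact_Icc.of_isClosed_subset hcl hsub

lemma contDiff_grad {n : ℕ} {g : (Fin n → ℝ) → ℝ} (hg : ContDiff ℝ 3 g) :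
    ContDiff ℝ 2 (grad n g) := by
  have hfd : ContDiff ℝ 2 (fderiv ℝ g) := hg.fderiv_right (by norm_num)
  exact contDiff_pi.mpr fun j => hfd.clm_apply contDiff_const

lemma contDiff_Ftilde (n K : ℕ) (f : Fin (K + 1) → (Fin n → ℝ) → ℝ)
    (hf : ∀ i, ContDiff ℝ 3 (f i)) : ContDiff ℝ 1 (Ftilde n K f) := by
  have hg : ∀ i : Fin (K + 1), ContDiff ℝ 1
      fun p : (Fin n → ℝ) × (Fin K → ℝ) => grad n (f i) p.1 :=
    fun i => ((contDiff_grad (hf i)).of_le (by norm_num)).comp contDiff_fst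
  unfold Ftilde
  refine ContDiff.add ?_ (hg _)
  refine ContDiff.sum fun i _ => ?_
  refine ContDiff.smul (?_ : ContDiff ℝ 1 fun p : (Fin n → ℝ) × (Fin K → ℝ) => p.2 i) ((hg _).sub (hg _))
  exact contDiff_pi.mp contDiff_snd i

section Algebra

variable {n K : ℕ} (f : Fin (K + 1) → (Fin n → ℝ) → ℝ) (x : Fin n → ℝ)

lemma Ftilde_eq_sum (α : Fin K → ℝ) :
    Ftilde n K f (x, α)
      = ∑ i : Fin (K + 1),
          (Fin.snoc α (1 - ∑ j, α j) : Fin (K + 1) → ℝ) i • grad n (f i) x := by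
  rw [Fin.sum_univ_castSucc]
  simp only [Fin.snoc_castSucc, Fin.snoc_last]
  show (∑ i : Fin K, α i • (grad n (f i.castSucc) x - grad n (f (Fin.last K)) x))
      + grad n (f (Fin.last K)) x = _
  simp only [smul_sub, sub_smul, one_smul, Finset.sum_sub_distrib, ← Finset.sum_smul]
  abel

/-- The (continuous linear) derivative of `α ↦ Ftilde (x, α)`. -/
noncomputable def ellCLM : (Fin K → ℝ) →L[ℝ] (Fin n → ℝ) :=
  ∑ i : Fin K, (ContinuousLinearMap.proj i).smulRight
    (grad n (f i.castSucc) x - grad n (f (Fin.last K)) x)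

lemma ellCLM_apply (d : Fin K → ℝ) :
    ellCLM f x d = ∑ i, d i • (grad n (f i.castSucc) x - grad n (f (Fin.last K)) x) := by
  simp [ellCLM]

lemma hasFDerivAt_Ftilde_snd (α₀ : Fin K → ℝ) :
    HasFDerivAt (fun α => Ftilde n K f (x, α)) (ellCLM f x) α₀ := by
  have heq : (fun α => Ftilde n K f (x, α))
      = fun α => ellCLM f x α + grad n (f (Fin.last K)) x := by
    funext α; rw [ellCLM_apply]; rfl
  rw [heq]
  exact (ellCLM f x).hasFDerivAt.add_const _

lemma ellCLM_eq_sum (d : Fin K → ℝ) :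
    ellCLM f x d = ∑ i : Fin (K + 1),
      (Fin.snoc d (-(∑ j, d j)) : Fin (K + 1) → ℝ) i • grad n (f i) x := by
  rw [Fin.sum_univ_castSucc]
  simp only [Fin.snoc_castSucc, Fin.snoc_last, ellCLM_apply]
  simp only [smul_sub, Finset.sum_sub_distrib, ← Finset.sum_smul, neg_smul]
  abel

lemma weights_unique (hrk : (Jac n (K + 1) f x).rank = K) {w w' : Fin (K + 1) → ℝ}
    (hw : ∑ i, w i • grad n (f i) x = 0) (hw' : ∑ i, w' i • grad n (f i) x = 0)
    (hs : ∑ i, w i = 1) :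
    w' = (∑ i, w' i) • w := by
  set T : (Fin (K + 1) → ℝ) →ₗ[ℝ] (Fin n → ℝ) := ((Jac n (K + 1) f x).transpose).mulVecLin with hT
  have hTapp : ∀ w : Fin (K + 1) → ℝ, T w = ∑ i, w i • grad n (f i) x := by
    intro w
    funext j
    rw [hT]
    simp only [Matrix.mulVecLin_apply, Matrix.mulVec, dotProduct,
      Matrix.transpose_apply, Finset.sum_apply, Pi.smul_apply, smul_eq_mul]
    refine Finset.sum_congr rfl fun i _ => ?_
    rw [mul_comm]
    rfl
  have hrange : Module.finrank ℝ (LinearMap.range T) = K := by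
    have h1 : ((Jac n (K + 1) f x).transpose).rank = K := by rw [Matrix.rank_transpose]; exact hrk
    rwa [Matrix.rank] at h1
  have hdim := LinearMap.finrank_range_add_finrank_ker T
  rw [hrange, Module.finrank_fin_fun] at hdim
  have hker1 : Module.finrank ℝ (LinearMap.ker T) = 1 := by omega
  have hwmem : w ∈ LinearMap.ker T := by rw [LinearMap.mem_ker, hTapp]; exact hw
  have hw'mem : w' ∈ LinearMap.ker T := by rw [LinearMap.mem_ker, hTapp]; exact hw'
  have hwne : (⟨w, hwmem⟩ : LinearMap.ker T) ≠ 0 := by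
    intro h0
    have : w = 0 := congrArg Subtype.val h0
    rw [this] at hs
    simpa using hs
  obtain ⟨c, hc⟩ := (finrank_eq_one_iff_of_nonzero' (⟨w, hwmem⟩ : LinearMap.ker T) hwne).mp
    hker1 ⟨w', hw'mem⟩
  have hc' : c • w = w' := congrArg Subtype.val hc
  have hsum : ∑ i, w' i = c := by
    rw [← hc']
    simp only [Pi.smul_apply, smul_eq_mul, ← Finset.mul_sum, hs, mul_one]
  rw [hsum, hc']

lemma alpha_unique (hrk : (Jac n (K + 1) f x).rank = K) {α α' : Fin K → ℝ}
    (h : Ftilde n K f (x, α) = 0) (h' : Ftilde n K f (x, α') = 0) : α = α' := by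
  set w : Fin (K + 1) → ℝ := Fin.snoc α (1 - ∑ j, α j) with hwdef
  set w' : Fin (K + 1) → ℝ := Fin.snoc α' (1 - ∑ j, α' j) with hw'def
  have hw : ∑ i, w i • grad n (f i) x = 0 := by rw [← Ftilde_eq_sum]; exact h
  have hw' : ∑ i, w' i • grad n (f i) x = 0 := by rw [← Ftilde_eq_sum]; exact h'
  have hs : ∑ i, w i = 1 := by
    rw [hwdef, Fin.sum_univ_castSucc]
    simp only [Fin.snoc_castSucc, Fin.snoc_last]
    ring
  have hs' : ∑ i, w' i = 1 := by
    rw [hw'def, Fin.sum_univ_castSucc]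
    simp only [Fin.snoc_castSucc, Fin.snoc_last]
    ring
  have hkey := weights_unique f x hrk hw hw' hs
  rw [hs', one_smul] at hkey
  funext i
  have := congrFun hkey i.castSucc
  rw [hwdef, hw'def] at this
  simpa [Fin.snoc_castSucc] using this.symm

lemma ellCLM_inj (hrk : (Jac n (K + 1) f x).rank = K) {α₀ : Fin K → ℝ}
    (h0 : Ftilde n K f (x, α₀) = 0) {d : Fin K → ℝ} (hd : ellCLM f x d = 0) : d = 0 := by
  set w : Fin (K + 1) → ℝ := Fin.snoc α₀ (1 - ∑ j, α₀ j) with hwdef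
  set wd : Fin (K + 1) → ℝ := Fin.snoc d (-∑ j, d j) with hwddef
  have hw : ∑ i, w i • grad n (f i) x = 0 := by rw [← Ftilde_eq_sum]; exact h0
  have hwd : ∑ i, wd i • grad n (f i) x = 0 := by rw [← ellCLM_eq_sum]; exact hd
  have hs : ∑ i, w i = 1 := by
    rw [hwdef, Fin.sum_univ_castSucc]
    simp only [Fin.snoc_castSucc, Fin.snoc_last]
    ring
  have hsd : ∑ i, wd i = 0 := by
    rw [hwddef, Fin.sum_univ_castSucc]
    simp only [Fin.snoc_castSucc, Fin.snoc_last]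
    ring
  have hkey := weights_unique f x hrk hw hwd hs
  rw [hsd, zero_smul] at hkey
  funext i
  have := congrFun hkey i.castSucc
  rw [hwddef] at this
  simpa [Fin.snoc_castSucc] using this

end Algebra

/-- under the regularity assumptions and `rank Df(x) = k - 1` on `P_int`,
the edge `P_E` is contained in `P_0 = P \ P_int`. -/
theorem edge_subset_P0 (n K : ℕ) (hK : 0 < K)
    (f : Fin (K + 1) → (Fin n → ℝ) → ℝ) (hf : ∀ i, ContDiff ℝ 3 (f i))
    (hreg : ∀ p : (Fin n → ℝ) × (Fin K → ℝ),
      p.2 ∈ openSimplex K → Ftilde n K f p = 0 → IsUnit (DxFtilde n K f p))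
    (hrank : ∀ x ∈ ParetoCriticalInt n K f, (Jac n (K + 1) f x).rank = K) :
    ParetoEdge n K f ⊆ ParetoCritical n K f \ ParetoCriticalInt n K f := by
  intro x hx
  obtain ⟨hxP, hne⟩ := hx
  refine ⟨hxP, fun hxint => hne ?_⟩
  have key : ∀ v ∈ Tan (ParetoCriticalInt n K f) x, -v ∈ Tan (ParetoCriticalInt n K f) x := by
    obtain ⟨α₀, hα₀s, hα₀F⟩ := hxint
    have hrkx : (Jac n (K + 1) f x).rank = K := hrank x ⟨α₀, hα₀s, hα₀F⟩
    have hF1 : ContDiff ℝ 1 (Ftilde n K f) := contDiff_Ftilde n K f hf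
    have hFd : HasStrictFDerivAt (Ftilde n K f) (fderiv ℝ (Ftilde n K f) (x, α₀)) (x, α₀) :=
      hF1.contDiffAt.hasStrictFDerivAt one_ne_zero
    set DF := fderiv ℝ (Ftilde n K f) (x, α₀) with hDFdef
    have hmk : ∀ y : Fin n → ℝ, HasFDerivAt (fun α : Fin K → ℝ => (y, α))
        (ContinuousLinearMap.inr ℝ (Fin n → ℝ) (Fin K → ℝ)) α₀ := by
      intro y
      have h : HasFDerivAt (fun α : Fin K → ℝ => ((y, α) : (Fin n → ℝ) × (Fin K → ℝ)))
          (((0 : (Fin K → ℝ) →L[ℝ] (Fin n → ℝ))).prod (ContinuousLinearMap.id ℝ (Fin K → ℝ)))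
          α₀ := (hasFDerivAt_const y α₀).prodMk (hasFDerivAt_id α₀)
      have hCLM : ((0 : (Fin K → ℝ) →L[ℝ] (Fin n → ℝ)).prod (ContinuousLinearMap.id ℝ (Fin K → ℝ)))
          = ContinuousLinearMap.inr ℝ (Fin n → ℝ) (Fin K → ℝ) := by
        refine ContinuousLinearMap.ext fun a => ?_
        simp
      rw [← hCLM]; exact h
    have hinlD : HasFDerivAt (fun y : Fin n → ℝ => (y, α₀))
        (ContinuousLinearMap.inl ℝ (Fin n → ℝ) (Fin K → ℝ)) x := by
      have h : HasFDerivAt (fun y : Fin n → ℝ => ((y, α₀) : (Fin n → ℝ) × (Fin K → ℝ)))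
          ((ContinuousLinearMap.id ℝ (Fin n → ℝ)).prod (0 : (Fin n → ℝ) →L[ℝ] (Fin K → ℝ)))
          x := (hasFDerivAt_id x).prodMk (hasFDerivAt_const α₀ x)
      have hCLM : ((ContinuousLinearMap.id ℝ (Fin n → ℝ)).prod
            (0 : (Fin n → ℝ) →L[ℝ] (Fin K → ℝ)))
          = ContinuousLinearMap.inl ℝ (Fin n → ℝ) (Fin K → ℝ) := by
        refine ContinuousLinearMap.ext fun a => ?_
        simp
      rw [← hCLM]; exact h
    have hpart : HasFDerivAt (fun y => Ftilde n K f (y, α₀))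
        (DF.comp (ContinuousLinearMap.inl ℝ (Fin n → ℝ) (Fin K → ℝ))) x :=
      HasFDerivAt.comp (g := Ftilde n K f) x hFd.hasFDerivAt hinlD
    have hunit : IsUnit (DF.comp (ContinuousLinearMap.inl ℝ (Fin n → ℝ) (Fin K → ℝ))) := by
      have h := hreg (x, α₀) hα₀s hα₀F
      have h2 : IsUnit (fderiv ℝ (fun y => Ftilde n K f (y, α₀)) x) := h
      rwa [hpart.fderiv] at h2
    obtain ⟨uu, huu⟩ := hunit
    set Tinv : (Fin n → ℝ) →L[ℝ] (Fin n → ℝ) := ↑uu⁻¹ with hTinvdef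
    have hTinv1 : ∀ ξ, Tinv ((DF.comp (ContinuousLinearMap.inl ℝ (Fin n → ℝ) (Fin K → ℝ))) ξ) = ξ := by
      intro ξ
      rw [← huu, hTinvdef, ← ContinuousLinearMap.mul_apply, uu.inv_mul,
        ContinuousLinearMap.one_apply]
    have hTinv2 : ∀ ξ, (DF.comp (ContinuousLinearMap.inl ℝ (Fin n → ℝ) (Fin K → ℝ))) (Tinv ξ) = ξ := by
      intro ξ
      rw [← huu, hTinvdef, ← ContinuousLinearMap.mul_apply, uu.mul_inv,
        ContinuousLinearMap.one_apply]
    set L := DF.prod (ContinuousLinearMap.snd ℝ (Fin n → ℝ) (Fin K → ℝ)) with hLdef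
    set Minv := (Tinv.comp ((ContinuousLinearMap.fst ℝ (Fin n → ℝ) (Fin K → ℝ))
        - DF.comp ((ContinuousLinearMap.inr ℝ (Fin n → ℝ) (Fin K → ℝ)).comp
          (ContinuousLinearMap.snd ℝ (Fin n → ℝ) (Fin K → ℝ))))).prod
        (ContinuousLinearMap.snd ℝ (Fin n → ℝ) (Fin K → ℝ)) with hMdef
    have hsub0 : ∀ (ξ : Fin n → ℝ) (a : Fin K → ℝ),
        DF (ξ, a) - DF ((0 : Fin n → ℝ), a)
          = (DF.comp (ContinuousLinearMap.inl ℝ (Fin n → ℝ) (Fin K → ℝ))) ξ := by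
      intro ξ a
      simp only [ContinuousLinearMap.coe_comp', Function.comp_apply,
        ContinuousLinearMap.inl_apply]
      rw [← map_sub, Prod.mk_sub_mk, sub_self, sub_zero]
    have hML : Function.LeftInverse Minv L := by
      rintro ⟨ξ, a⟩
      rw [hLdef, hMdef]
      simp only [ContinuousLinearMap.prod_apply, ContinuousLinearMap.coe_comp',
        Function.comp_apply, ContinuousLinearMap.coe_fst', ContinuousLinearMap.coe_snd',
        ContinuousLinearMap.coe_sub', Pi.sub_apply, ContinuousLinearMap.inr_apply]
      rw [hsub0 ξ a, hTinv1]
    have hLM : Function.RightInverse Minv L := by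
      rintro ⟨y, b⟩
      rw [hLdef, hMdef]
      simp only [ContinuousLinearMap.prod_apply, ContinuousLinearMap.coe_comp',
        Function.comp_apply, ContinuousLinearMap.coe_fst', ContinuousLinearMap.coe_snd',
        ContinuousLinearMap.coe_sub', Pi.sub_apply, ContinuousLinearMap.inr_apply]
      have h1 : DF (Tinv (y - DF ((0 : Fin n → ℝ), b)), b)
          - DF ((0 : Fin n → ℝ), b)
          = (DF.comp (ContinuousLinearMap.inl ℝ (Fin n → ℝ) (Fin K → ℝ)))
              (Tinv (y - DF ((0 : Fin n → ℝ), b))) := hsub0 _ b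
      rw [hTinv2] at h1
      have h2 : DF (Tinv (y - DF ((0 : Fin n → ℝ), b)), b) = y := by
        rw [sub_eq_iff_eq_add] at h1
        rw [h1]
        abel
      rw [h2]
    set Lam := ContinuousLinearEquiv.equivOfInverse L Minv hML hLM with hLamdef
    set Phi : (Fin n → ℝ) × (Fin K → ℝ) → (Fin n → ℝ) × (Fin K → ℝ) :=
      fun p => (Ftilde n K f p, p.2) with hPhidef
    have hPhid : HasStrictFDerivAt Phi (Lam : ((Fin n → ℝ) × (Fin K → ℝ)) →L[ℝ] _) (x, α₀) := by
      have h := hFd.prodMk hasStrictFDerivAt_snd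
      exact h
    set linv := hPhid.localInverse Phi Lam (x, α₀) with hlinvdef
    have hPhipt : Phi (x, α₀) = ((0 : Fin n → ℝ), α₀) := by
      rw [hPhidef]; simp [hα₀F]
    set g : (Fin K → ℝ) → (Fin n → ℝ) := fun α => (linv ((0 : Fin n → ℝ), α)).1 with hgdef
    have hlinvD : HasStrictFDerivAt linv
        ((Lam.symm : ((Fin n → ℝ) × (Fin K → ℝ)) →L[ℝ] _)) ((0 : Fin n → ℝ), α₀) := by
      have h := hPhid.to_localInverse
      rwa [hPhipt] at h
    set Dg := (ContinuousLinearMap.fst ℝ (Fin n → ℝ) (Fin K → ℝ)).comp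
        (((Lam.symm : ((Fin n → ℝ) × (Fin K → ℝ)) →L[ℝ] _)).comp
          (ContinuousLinearMap.inr ℝ (Fin n → ℝ) (Fin K → ℝ))) with hDgdef
    have hgD : HasFDerivAt g Dg α₀ := by
      have h1 := hlinvD.hasFDerivAt.comp α₀ (hmk (0 : Fin n → ℝ))
      have h2 := (ContinuousLinearMap.fst ℝ (Fin n → ℝ) (Fin K → ℝ)).hasFDerivAt.comp α₀ h1
      exact h2
    have hleft : ∀ᶠ p in 𝓝 (x, α₀), linv (Phi p) = p := hPhid.eventually_left_inverse
    have hright0 : ∀ᶠ q in 𝓝 (Phi (x, α₀)), Phi (linv q) = q := hPhid.eventually_right_inverse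
    rw [hPhipt] at hright0
    have hgx : g α₀ = x := by
      have h := hleft.self_of_nhds
      rw [hPhipt] at h
      show (linv ((0 : Fin n → ℝ), α₀)).1 = x
      rw [h]
    have hmkcont : ContinuousAt (fun α : Fin K → ℝ => ((0 : Fin n → ℝ), α)) α₀ :=
      (continuous_const.prodMk continuous_id).continuousAt
    have hrightα : ∀ᶠ α in 𝓝 α₀, Ftilde n K f (g α, α) = 0 := by
      filter_upwards [hmkcont.tendsto.eventually hright0] with α hα
      have h2 : (linv ((0 : Fin n → ℝ), α)).2 = α := congrArg Prod.snd hα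
      have h1 : Ftilde n K f (linv ((0 : Fin n → ℝ), α)) = 0 := congrArg Prod.fst hα
      have h3 : (g α, α) = linv ((0 : Fin n → ℝ), α) := Prod.ext rfl h2.symm
      rw [h3]; exact h1
    have hDinj : ∀ d : Fin K → ℝ, Dg d = 0 → d = 0 := by
      intro d hd0
      have hpair : HasFDerivAt (fun α => (g α, α))
          (Dg.prod (ContinuousLinearMap.id ℝ (Fin K → ℝ))) α₀ := hgD.prodMk (hasFDerivAt_id α₀)
      have hFd' : HasFDerivAt (Ftilde n K f) DF (g α₀, α₀) := by
        rw [hgx]; exact hFd.hasFDerivAt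
      have hcomp0 : HasFDerivAt ((Ftilde n K f) ∘ (fun α => (g α, α)))
          (DF.comp (Dg.prod (ContinuousLinearMap.id ℝ (Fin K → ℝ)))) α₀ :=
        HasFDerivAt.comp α₀ hFd' hpair
      have hcomp : HasFDerivAt (fun α => Ftilde n K f (g α, α))
          (DF.comp (Dg.prod (ContinuousLinearMap.id ℝ (Fin K → ℝ)))) α₀ := hcomp0
      have hconst : HasFDerivAt (fun α => Ftilde n K f (g α, α))
          (0 : (Fin K → ℝ) →L[ℝ] (Fin n → ℝ)) α₀ := by
        have h0 : HasFDerivAt (fun _ : Fin K → ℝ => (0 : Fin n → ℝ))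
            (0 : (Fin K → ℝ) →L[ℝ] (Fin n → ℝ)) α₀ := hasFDerivAt_const _ _
        exact h0.congr_of_eventuallyEq hrightα
      have hzero : DF.comp (Dg.prod (ContinuousLinearMap.id ℝ (Fin K → ℝ))) = 0 :=
        hcomp.unique hconst
      have hellD : DF.comp (ContinuousLinearMap.inr ℝ (Fin n → ℝ) (Fin K → ℝ)) = ellCLM f x := by
        have h0 : HasFDerivAt ((Ftilde n K f) ∘ (fun α : Fin K → ℝ => (x, α)))
            (DF.comp (ContinuousLinearMap.inr ℝ (Fin n → ℝ) (Fin K → ℝ))) α₀ :=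
          HasFDerivAt.comp α₀ hFd.hasFDerivAt (hmk x)
        have h1 : HasFDerivAt (fun α => Ftilde n K f (x, α))
            (DF.comp (ContinuousLinearMap.inr ℝ (Fin n → ℝ) (Fin K → ℝ))) α₀ := h0
        exact h1.unique (hasFDerivAt_Ftilde_snd f x α₀)
      have h4 : DF (Dg d, d) = 0 := by
        have h := ContinuousLinearMap.ext_iff.mp hzero d
        simpa using h
      have h5 : ellCLM f x d = 0 := by
        rw [← hellD]
        simp only [ContinuousLinearMap.coe_comp', Function.comp_apply,
          ContinuousLinearMap.inr_apply]
        conv_lhs => rw [← hd0]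
        exact h4
      exact ellCLM_inj f x hrkx hα₀F h5
    have huniq : ∀ {a b : Fin K → ℝ}, Ftilde n K f (x, a) = 0 → Ftilde n K f (x, b) = 0 →
        a = b := fun ha hb => alpha_unique f x hrkx ha hb
    intro v hv
    rcases hv with hv0 | ⟨uSeq, hune, hu0, humem, hudir⟩
    · exact Or.inl (by rw [hv0, neg_zero])
    choose aSeq haS haF using humem
    obtain ⟨αs, hαsmem, φ₁, hφ₁mono, hφ₁tend⟩ :=
      (isCompact_closedSimplex K).tendsto_subseq (fun m => openSimplex_subset K (haS m))
    have hxutend : Filter.Tendsto (fun m => (x + uSeq (φ₁ m), aSeq (φ₁ m))) atTop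
        (𝓝 (x, αs)) := by
      refine Filter.Tendsto.prodMk_nhds ?_ hφ₁tend
      have h := hu0.comp hφ₁mono.tendsto_atTop
      have hcx : Filter.Tendsto (fun _ : ℕ => x) atTop (𝓝 x) := tendsto_const_nhds
      have h2 := hcx.add h
      simpa [Function.comp] using h2
    have hFαs : Ftilde n K f (x, αs) = 0 := by
      have h1 : Filter.Tendsto (fun m => Ftilde n K f (x + uSeq (φ₁ m), aSeq (φ₁ m))) atTop
          (𝓝 (Ftilde n K f (x, αs))) :=
        ((contDiff_Ftilde n K f hf).continuous.tendsto _).comp hxutend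
      have h2 : (fun m => Ftilde n K f (x + uSeq (φ₁ m), aSeq (φ₁ m)))
          = fun _ => (0 : Fin n → ℝ) := funext fun m => haF _
      rw [h2] at h1
      exact tendsto_nhds_unique h1 tendsto_const_nhds
    have hαs0 : αs = α₀ := huniq hFαs hα₀F
    rw [hαs0] at hφ₁tend hxutend
    have hgev : ∀ᶠ m in atTop, g (aSeq (φ₁ m)) = x + uSeq (φ₁ m) := by
      filter_upwards [hxutend.eventually hleft] with m hm
      have hPhim : Phi (x + uSeq (φ₁ m), aSeq (φ₁ m)) = ((0 : Fin n → ℝ), aSeq (φ₁ m)) := by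
        rw [hPhidef]; simp [haF (φ₁ m)]
      rw [hPhim] at hm
      show (linv ((0 : Fin n → ℝ), aSeq (φ₁ m))).1 = x + uSeq (φ₁ m)
      rw [hm]
    obtain ⟨N, hN⟩ := eventually_atTop.mp hgev
    set ψ : ℕ → ℕ := fun m => φ₁ (m + N) with hψdef
    have hgψ : ∀ m, g (aSeq (ψ m)) = x + uSeq (ψ m) := fun m => hN _ (Nat.le_add_left N m)
    set β : ℕ → (Fin K → ℝ) := fun m => aSeq (ψ m) - α₀ with hβdef
    have haψtend : Filter.Tendsto (fun m => aSeq (ψ m)) atTop (𝓝 α₀) :=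
      hφ₁tend.comp (tendsto_add_atTop_nat N)
    have hβ0 : Filter.Tendsto β atTop (𝓝 0) := by
      have h := haψtend.sub_const α₀
      simp only [hβdef]
      simpa using h
    have hβne : ∀ m, β m ≠ 0 := by
      intro m h0
      have ha0 : aSeq (ψ m) = α₀ := by
        have h1 := h0
        simp only [hβdef] at h1
        rwa [sub_eq_zero] at h1
      have h1 := hgψ m
      rw [ha0, hgx] at h1
      exact hune (ψ m) (left_eq_add.mp h1)
    have hdm : ∀ m, (‖β m‖⁻¹ • β m) ∈ Metric.sphere (0 : Fin K → ℝ) 1 := by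
      intro m
      rw [mem_sphere_zero_iff_norm, norm_smul, norm_inv, norm_norm,
        inv_mul_cancel₀ (norm_ne_zero_iff.mpr (hβne m))]
    obtain ⟨d, hdmem, φ₂, hφ₂mono, hφ₂tend⟩ :=
      (isCompact_sphere (0 : Fin K → ℝ) 1).tendsto_subseq hdm
    have hdnorm : ‖d‖ = 1 := mem_sphere_zero_iff_norm.mp hdmem
    have hβ0' : Filter.Tendsto (fun m => β (φ₂ m)) atTop (𝓝 0) :=
      hβ0.comp hφ₂mono.tendsto_atTop
    have hd' : Filter.Tendsto (fun m => ‖β (φ₂ m)‖⁻¹ • β (φ₂ m)) atTop (𝓝 d) := hφ₂tend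
    have hlim := dir_limit hgD hβ0' hd'
    have hlim' : Filter.Tendsto (fun m => ‖β (φ₂ m)‖⁻¹ • uSeq (ψ (φ₂ m))) atTop
        (𝓝 (Dg d)) := by
      refine hlim.congr fun m => ?_
      have h1 : α₀ + β (φ₂ m) = aSeq (ψ (φ₂ m)) := by
        simp only [hβdef]; abel
      rw [h1, hgψ, hgx]
      congr 1
      abel
    set z := Dg d with hzdef
    have hzne : z ≠ 0 := by
      intro h0
      have hd0 := hDinj d h0
      rw [hd0] at hdnorm
      simp at hdnorm
    have htpos : ∀ m, 0 < ‖β (φ₂ m)‖ := fun m => norm_pos_iff.mpr (hβne (φ₂ m))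
    obtain ⟨hdirz, -⟩ := tendsto_norm_inv_smul_of_pos_smul htpos hzne hlim'
    set σ : ℕ → ℕ := fun m => ψ (φ₂ m) with hσdef
    have hσtop : Filter.Tendsto σ atTop atTop := by
      have h1 : Filter.Tendsto ψ atTop atTop :=
        hφ₁mono.tendsto_atTop.comp (tendsto_add_atTop_nat N)
      exact h1.comp hφ₂mono.tendsto_atTop
    have hvz : ‖v‖⁻¹ • v = ‖z‖⁻¹ • z := tendsto_nhds_unique (hudir.comp hσtop) hdirz
    -- now construct a sequence witnessing `-v ∈ Tan`
    have hdne : d ≠ 0 := by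
      intro h0
      rw [h0] at hdnorm
      simp at hdnorm
    have hSopen : ∀ᶠ α in 𝓝 α₀, Ftilde n K f (g α, α) = 0 ∧ α ∈ openSimplex K :=
      hrightα.and ((isOpen_openSimplex K).mem_nhds hα₀s : openSimplex K ∈ 𝓝 α₀)
    set t : ℕ → ℝ := fun m => ((m : ℝ) + 1)⁻¹ with htdef
    have htpos' : ∀ m, 0 < t m := by
      intro m
      simp only [htdef]
      positivity
    have ht0 : Filter.Tendsto t atTop (𝓝 0) := by
      simp only [htdef]
      exact tendsto_inv_atTop_zero.comp
        (tendsto_atTop_add_const_right atTop 1 tendsto_natCast_atTop_atTop)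
    set αseq : ℕ → (Fin K → ℝ) := fun m => α₀ - t m • d with hαseqdef
    have hαseqtend : Filter.Tendsto αseq atTop (𝓝 α₀) := by
      have h1 : Filter.Tendsto (fun m => t m • d) atTop (𝓝 0) := by
        have h := ht0.smul_const d
        simpa using h
      have h2 : Filter.Tendsto (fun _ : ℕ => α₀) atTop (𝓝 α₀) := tendsto_const_nhds
      have h3 := h2.sub h1
      simp only [hαseqdef]
      simpa using h3
    set βn : ℕ → (Fin K → ℝ) := fun m => -(t m • d) with hβndef
    have hβnne : ∀ m, βn m ≠ 0 := by
      intro m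
      simp only [hβndef]
      exact neg_ne_zero.mpr (smul_ne_zero (htpos' m).ne' hdne)
    have hβn0 : Filter.Tendsto βn atTop (𝓝 0) := by
      have h1 : Filter.Tendsto (fun m => t m • d) atTop (𝓝 0) := by
        have h := ht0.smul_const d
        simpa using h
      simp only [hβndef]
      simpa using h1.neg
    have hβndir : (fun m => ‖βn m‖⁻¹ • βn m) = fun _ => -d := by
      funext m
      simp only [hβndef]
      simp only [norm_neg, norm_smul, Real.norm_eq_abs, abs_of_pos (htpos' m), hdnorm, mul_one,
        smul_neg, smul_smul, inv_mul_cancel₀ (htpos' m).ne', one_smul]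
    have hlimw := dir_limit hgD hβn0 (by rw [hβndir]; exact tendsto_const_nhds)
    have hDgneg : Dg (-d) = -z := by rw [map_neg]
    rw [hDgneg] at hlimw
    have hlimw' : Filter.Tendsto (fun m => ‖βn m‖⁻¹ • (g (αseq m) - x)) atTop (𝓝 (-z)) := by
      refine hlimw.congr fun m => ?_
      have h1 : α₀ + βn m = αseq m := by
        simp only [hβndef, hαseqdef]
        abel
      rw [h1, hgx]
    have hβnnorm : ∀ m, 0 < ‖βn m‖ := fun m => norm_pos_iff.mpr (hβnne m)
    obtain ⟨hwdir, hwne⟩ :=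
      tendsto_norm_inv_smul_of_pos_smul hβnnorm (neg_ne_zero.mpr hzne) hlimw'
    have hmemev : ∀ᶠ m in atTop, (g (αseq m) - x ≠ 0)
        ∧ x + (g (αseq m) - x) ∈ ParetoCriticalInt n K f := by
      filter_upwards [hwne, hαseqtend.eventually hSopen] with m h1 h2
      refine ⟨h1, ?_⟩
      have hx2 : x + (g (αseq m) - x) = g (αseq m) := by abel
      rw [hx2]
      exact ⟨αseq m, h2.2, h2.1⟩
    have hfinal : Filter.Tendsto (fun m => ‖g (αseq m) - x‖⁻¹ • (g (αseq m) - x)) atTop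
        (𝓝 (‖-v‖⁻¹ • -v)) := by
      have heq : ‖-v‖⁻¹ • (-v) = ‖-z‖⁻¹ • (-z) := by
        rw [norm_neg, norm_neg, smul_neg, smul_neg, hvz]
      rw [heq]
      exact hwdir
    have hw0 : Filter.Tendsto (fun m => g (αseq m) - x) atTop (𝓝 0) := by
      have h1 : Filter.Tendsto (fun m => g (αseq m)) atTop (𝓝 x) := by
        have h := hgD.continuousAt.tendsto.comp hαseqtend
        rwa [hgx] at h
      have h2 := h1.sub_const x
      simpa using h2
    exact mem_tan_of_eventually hw0 hmemev hfinal
  ext v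
  constructor
  · intro hv
    exact ⟨-v, key _ hv, neg_neg v⟩
  · rintro ⟨w, hw, rfl⟩
    exact key _ hw
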